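/- Let τ ∈ [0,1), n ≥ 1, and let b ≥ c > 0 be reals; set y = √(bc), δ = b − c, let x be real and z = x + i·y. Let X₂ be a real n×n matrix such that the complex matrix M = z·1 − X₂ (with X₂ coerced entrywise to ℂ) is invertible, and set B = M† M, where M† is the conjugate transpose. Define c̃₁ = (1/4)(2 + (δ² + 2y²)/y²), c̃₂ = (1/2)(1 + c/b), and for w₁, w₂ ∈ ℝⁿ set S(w₁,w₂) = (1/2) (w₁ − i√(b/c)·w₂)ᵀ B⁻¹ (w₁ + i√(b/c)·w₂). Then the iterated Gaussian average ⟨⟨ c̃₁ + c̃₂ · S(w₁,w₂) ⟩_{w₂}⟩_{w₁} equals (1/2)(2 + δ²/(2y²)) · (1 + (1−τ²) Tr(B⁻¹)). -/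

import Mathlib

open MeasureTheory Matrix Finset

/-- Gaussian average `⟨A⟩_w = (2π(1−τ²))^{-n/2} ∫_{ℝⁿ} exp(−‖w‖²/(2(1−τ²))) A(w) dw`. -/
noncomputable def gAvg (τ : ℝ) (n : ℕ) (A : (Fin n → ℝ) → ℂ) : ℂ :=
  (((Real.sqrt (2 * Real.pi * (1 - τ ^ 2)) : ℝ) : ℂ) ^ n)⁻¹ *
    ∫ w : Fin n → ℝ,
      (Real.exp (-(∑ i, (w i) ^ 2) / (2 * (1 - τ ^ 2))) : ℂ) * A w


namespace GA


lemma exp_form (v : ℝ) : ∀ x : ℝ, Real.exp (-x ^ 2 / (2 * v)) = Real.exp (-(1/(2*v)) * x ^ 2) := by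
  intro x; congr 1; ring

lemma integ0 {v : ℝ} (hv : 0 < v) : Integrable (fun x : ℝ => Real.exp (-x ^ 2 / (2 * v))) := by
  simp only [exp_form v]
  exact integrable_exp_neg_mul_sq (by positivity)

lemma integ1 {v : ℝ} (hv : 0 < v) : Integrable (fun x : ℝ => x * Real.exp (-x ^ 2 / (2 * v))) := by
  simp only [exp_form v]
  exact integrable_mul_exp_neg_mul_sq (by positivity)

lemma integ2 {v : ℝ} (hv : 0 < v) :
    Integrable (fun x : ℝ => x ^ 2 * Real.exp (-x ^ 2 / (2 * v))) := by
  simp only [exp_form v]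
  have := integrable_rpow_mul_exp_neg_mul_sq (b := 1/(2*v)) (by positivity) (s := 2) (by norm_num)
  have h2 : ∀ x : ℝ, x ^ (2 : ℝ) = x ^ (2 : ℕ) := fun x => by
    rw [← Real.rpow_natCast x 2]; norm_num
  simpa [h2] using this

lemma int0 {v : ℝ} (hv : 0 < v) :
    ∫ x : ℝ, Real.exp (-x ^ 2 / (2 * v)) = Real.sqrt (2 * Real.pi * v) := by
  simp only [exp_form v]
  rw [integral_gaussian]
  congr 1
  field_simp

lemma int1 {v : ℝ} (hv : 0 < v) :
    ∫ x : ℝ, x * Real.exp (-x ^ 2 / (2 * v)) = 0 := by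
  have hb : (0:ℝ) < 1/(2*v) := by positivity
  simp only [exp_form v]
  set b := 1/(2*v) with hbdef
  have hderiv : ∀ x : ℝ, HasDerivAt (fun x : ℝ => -(1/(2*b)) * Real.exp (-b * x ^ 2))
      (x * Real.exp (-b * x ^ 2)) x := by
    intro x
    have h1 : HasDerivAt (fun x : ℝ => -b * x ^ 2) (-b * (2 * x)) x := by
      simpa using ((hasDerivAt_pow 2 x).const_mul (-b))
    have h2 := (h1.exp).const_mul (-(1/(2*b)))
    refine h2.congr_deriv ?_
    field_simp
  have hf : Integrable (fun x : ℝ => -(1/(2*b)) * Real.exp (-b * x ^ 2)) :=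
    (integrable_exp_neg_mul_sq hb).const_mul _
  exact integral_eq_zero_of_hasDerivAt_of_integrable hderiv (integrable_mul_exp_neg_mul_sq hb) hf

lemma int2 {v : ℝ} (hv : 0 < v) :
    ∫ x : ℝ, x ^ 2 * Real.exp (-x ^ 2 / (2 * v)) = v * Real.sqrt (2 * Real.pi * v) := by
  have hb : (0:ℝ) < 1/(2*v) := by positivity
  have hint2 := integ2 hv
  simp only [exp_form v] at hint2 ⊢
  set b := 1/(2*v) with hbdef
  have hderiv : ∀ x : ℝ, HasDerivAt (fun x : ℝ => x * Real.exp (-b * x ^ 2))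
      (Real.exp (-b * x ^ 2) - 2 * b * (x ^ 2 * Real.exp (-b * x ^ 2))) x := by
    intro x
    have h1 : HasDerivAt (fun x : ℝ => -b * x ^ 2) (-b * (2 * x)) x := by
      simpa using ((hasDerivAt_pow 2 x).const_mul (-b))
    have h2 := (hasDerivAt_id x).mul h1.exp
    refine h2.congr_deriv ?_
    simp only [id_eq]
    ring
  have hg : Integrable (fun x : ℝ =>
      Real.exp (-b * x ^ 2) - 2 * b * (x ^ 2 * Real.exp (-b * x ^ 2))) :=
    (integrable_exp_neg_mul_sq hb).sub (hint2.const_mul _)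
  have h0 := integral_eq_zero_of_hasDerivAt_of_integrable hderiv hg
    (integrable_mul_exp_neg_mul_sq hb)
  rw [integral_sub (integrable_exp_neg_mul_sq hb) (hint2.const_mul _),
    integral_const_mul] at h0
  have hI : ∫ x : ℝ, Real.exp (-b * x ^ 2) = Real.sqrt (2 * Real.pi * v) := by
    have := int0 hv; simpa only [exp_form v] using this
  rw [hI] at h0
  have hbne : b ≠ 0 := ne_of_gt hb
  have h2b : 2 * b = 1 / v := by rw [hbdef]; field_simp
  rw [h2b] at h0
  have h3 : (1/v) * ∫ x : ℝ, x ^ 2 * Real.exp (-b * x ^ 2) = Real.sqrt (2 * Real.pi * v) := by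
    linarith
  calc ∫ x : ℝ, x ^ 2 * Real.exp (-b * x ^ 2)
      = v * ((1/v) * ∫ x : ℝ, x ^ 2 * Real.exp (-b * x ^ 2)) := by
        rw [← mul_assoc, mul_one_div_cancel hv.ne', one_mul]
    _ = v * Real.sqrt (2 * Real.pi * v) := by rw [h3]


variable {n : ℕ} {v : ℝ}

/-- factor for a degree-2 monomial `w i * w j` -/
noncomputable def fac (v : ℝ) (i j : Fin n) (k : Fin n) : ℝ → ℝ :=
  fun x => (if k = i then x else 1) * (if k = j then x else 1) * Real.exp (-x ^ 2 / (2 * v))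

/-- factor for a degree-1 monomial `w i` -/
noncomputable def fac1 (v : ℝ) (i : Fin n) (k : Fin n) : ℝ → ℝ :=
  fun x => (if k = i then x else 1) * Real.exp (-x ^ 2 / (2 * v))

lemma fac_integrable (hv : 0 < v) (i j k : Fin n) : Integrable (fac v i j k) := by
  unfold fac
  by_cases hki : k = i
  · subst hki
    by_cases hkj : k = j
    · subst hkj
      simpa [← pow_two] using integ2 hv
    · simp only [if_pos rfl, if_neg hkj, mul_one]
      exact integ1 hv
  · by_cases hkj : k = j
    · subst hkj
      simp only [if_neg hki, if_pos rfl, one_mul]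
      exact integ1 hv
    · simp only [if_neg hki, if_neg hkj, one_mul]
      exact integ0 hv

lemma fac1_integrable (hv : 0 < v) (i k : Fin n) : Integrable (fac1 v i k) := by
  unfold fac1
  by_cases hki : k = i
  · subst hki
    simp only [if_pos rfl]
    exact integ1 hv
  · simp only [if_neg hki, one_mul]
    exact integ0 hv

lemma fac_integral (hv : 0 < v) (i j k : Fin n) :
    ∫ x : ℝ, fac v i j k x =
      if k = i then (if k = j then v * Real.sqrt (2 * Real.pi * v) else 0)
      else (if k = j then 0 else Real.sqrt (2 * Real.pi * v)) := by
  unfold fac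
  by_cases hki : k = i
  · subst hki
    by_cases hkj : k = j
    · subst hkj
      simp only [if_pos rfl]
      simpa [← pow_two] using int2 hv
    · simp only [if_pos rfl, if_neg hkj, mul_one]
      exact int1 hv
  · by_cases hkj : k = j
    · subst hkj
      simp only [if_neg hki, if_pos rfl, one_mul]
      exact int1 hv
    · simp only [if_neg hki, if_neg hkj, one_mul]
      exact int0 hv

lemma fac1_integral (hv : 0 < v) (i k : Fin n) :
    ∫ x : ℝ, fac1 v i k x =
      if k = i then 0 else Real.sqrt (2 * Real.pi * v) := by
  unfold fac1
  by_cases hki : k = i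
  · subst hki
    simp only [if_pos rfl]
    exact int1 hv
  · simp only [if_neg hki, one_mul]
    exact int0 hv

lemma sum_div_form (v : ℝ) (w : Fin n → ℝ) :
    ∑ k, -(w k) ^ 2 / (2 * v) = -(∑ k, (w k) ^ 2) / (2 * v) := by
  rw [neg_div, ← Finset.sum_div]
  simp [neg_div]

lemma prod_fac (v : ℝ) (i j : Fin n) (w : Fin n → ℝ) :
    ∏ k, fac v i j k (w k) =
      w i * w j * Real.exp (-(∑ k, (w k) ^ 2) / (2 * v)) := by
  unfold fac
  rw [Finset.prod_mul_distrib, Finset.prod_mul_distrib, Finset.prod_ite_eq' univ i (fun k => w k),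
    Finset.prod_ite_eq' univ j (fun k => w k), ← Real.exp_sum]
  simp [sum_div_form]

lemma prod_fac1 (v : ℝ) (i : Fin n) (w : Fin n → ℝ) :
    ∏ k, fac1 v i k (w k) =
      w i * Real.exp (-(∑ k, (w k) ^ 2) / (2 * v)) := by
  unfold fac1
  rw [Finset.prod_mul_distrib, Finset.prod_ite_eq' univ i (fun k => w k), ← Real.exp_sum]
  simp [sum_div_form]

lemma prod_fac0 (v : ℝ) (w : Fin n → ℝ) :
    ∏ k, Real.exp (-(w k) ^ 2 / (2 * v)) = Real.exp (-(∑ k, (w k) ^ 2) / (2 * v)) := by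
  rw [← Real.exp_sum]
  simp [sum_div_form]

-- real-level integrability and values
lemma keyR2_int (hv : 0 < v) (i j : Fin n) :
    Integrable (fun w : Fin n → ℝ => w i * w j * Real.exp (-(∑ k, (w k) ^ 2) / (2 * v))) := by
  have h := Integrable.fintype_prod (𝕜 := ℝ) (f := fac v i j) (fun k => fac_integrable hv i j k)
  have heq : (fun w : Fin n → ℝ => ∏ k, fac v i j k (w k)) =
      fun w => w i * w j * Real.exp (-(∑ k, (w k) ^ 2) / (2 * v)) :=
    funext (prod_fac v i j)
  rwa [heq] at h

lemma keyR1_int (hv : 0 < v) (i : Fin n) :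
    Integrable (fun w : Fin n → ℝ => w i * Real.exp (-(∑ k, (w k) ^ 2) / (2 * v))) := by
  have h := Integrable.fintype_prod (𝕜 := ℝ) (f := fac1 v i) (fun k => fac1_integrable hv i k)
  have heq : (fun w : Fin n → ℝ => ∏ k, fac1 v i k (w k)) =
      fun w => w i * Real.exp (-(∑ k, (w k) ^ 2) / (2 * v)) :=
    funext (prod_fac1 v i)
  rwa [heq] at h

lemma keyR0_int (hv : 0 < v) :
    Integrable (fun w : Fin n → ℝ => Real.exp (-(∑ k, (w k) ^ 2) / (2 * v))) := by
  have h := Integrable.fintype_prod (𝕜 := ℝ)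
    (f := fun _ : Fin n => fun x : ℝ => Real.exp (-x ^ 2 / (2 * v))) (fun k => integ0 hv)
  have heq : (fun w : Fin n → ℝ => ∏ k, Real.exp (-(w k) ^ 2 / (2 * v))) =
      fun w => Real.exp (-(∑ k, (w k) ^ 2) / (2 * v)) :=
    funext (prod_fac0 v)
  rwa [heq] at h

lemma keyR2_val (hv : 0 < v) (i j : Fin n) :
    ∫ w : Fin n → ℝ, w i * w j * Real.exp (-(∑ k, (w k) ^ 2) / (2 * v)) =
      (if i = j then v else 0) * Real.sqrt (2 * Real.pi * v) ^ n := by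
  have heq : (fun w : Fin n → ℝ => w i * w j * Real.exp (-(∑ k, (w k) ^ 2) / (2 * v))) =
      fun w => ∏ k, fac v i j k (w k) := (funext (prod_fac v i j)).symm
  rw [heq, integral_fintype_prod_volume_eq_prod (f := fac v i j)]
  simp only [fac_integral hv i j]
  by_cases hij : i = j
  · subst hij
    have : ∀ k : Fin n, (if k = i then (if k = i then v * Real.sqrt (2 * Real.pi * v) else 0)
        else (if k = i then 0 else Real.sqrt (2 * Real.pi * v))) =
        (if k = i then v else 1) * Real.sqrt (2 * Real.pi * v) := by
      intro k; by_cases hk : k = i <;> simp [hk]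
    simp only [this]
    rw [Finset.prod_mul_distrib, Finset.prod_ite_eq' univ i (fun _ => v)]
    simp [Finset.card_univ]
  · rw [Finset.prod_eq_zero (Finset.mem_univ i)]
    · simp [hij]
    · simp [hij]

lemma keyR1_val (hv : 0 < v) (i : Fin n) :
    ∫ w : Fin n → ℝ, w i * Real.exp (-(∑ k, (w k) ^ 2) / (2 * v)) = 0 := by
  have heq : (fun w : Fin n → ℝ => w i * Real.exp (-(∑ k, (w k) ^ 2) / (2 * v))) =
      fun w => ∏ k, fac1 v i k (w k) := (funext (prod_fac1 v i)).symm
  rw [heq, integral_fintype_prod_volume_eq_prod (f := fac1 v i)]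
  rw [Finset.prod_eq_zero (Finset.mem_univ i)]
  rw [fac1_integral hv]
  simp

lemma keyR0_val (hv : 0 < v) :
    ∫ w : Fin n → ℝ, Real.exp (-(∑ k, (w k) ^ 2) / (2 * v)) =
      Real.sqrt (2 * Real.pi * v) ^ n := by
  have heq : (fun w : Fin n → ℝ => Real.exp (-(∑ k, (w k) ^ 2) / (2 * v))) =
      fun w => ∏ k, Real.exp (-(w k) ^ 2 / (2 * v)) := (funext (prod_fac0 v)).symm
  rw [heq, integral_fintype_prod_volume_eq_prod (f := fun _ x => Real.exp (-x ^ 2 / (2 * v)))]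
  simp [int0 hv, Finset.card_univ]


lemma myIOR {α : Type*} [MeasurableSpace α] {μ : Measure α} (f : α → ℝ) :
    ∫ x, ((f x : ℝ) : ℂ) ∂μ = ((∫ x, f x ∂μ : ℝ) : ℂ) :=
  integral_ofReal

-- Complex layer
lemma C2_int (hv : 0 < v) (i j : Fin n) (c : ℂ) :
    Integrable (fun w : Fin n → ℝ =>
      (Real.exp (-(∑ k, (w k) ^ 2) / (2 * v)) : ℂ) * (c * (w i : ℂ) * (w j : ℂ))) := by
  have heq : (fun w : Fin n → ℝ =>
      (Real.exp (-(∑ k, (w k) ^ 2) / (2 * v)) : ℂ) * (c * (w i : ℂ) * (w j : ℂ))) =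
      fun w => c * (((w i * w j * Real.exp (-(∑ k, (w k) ^ 2) / (2 * v)) : ℝ)) : ℂ) := by
    funext w; push_cast; ring
  rw [heq]
  exact ((keyR2_int hv i j).ofReal).const_mul c

lemma C1_int (hv : 0 < v) (i : Fin n) (c : ℂ) :
    Integrable (fun w : Fin n → ℝ =>
      (Real.exp (-(∑ k, (w k) ^ 2) / (2 * v)) : ℂ) * (c * (w i : ℂ))) := by
  have heq : (fun w : Fin n → ℝ =>
      (Real.exp (-(∑ k, (w k) ^ 2) / (2 * v)) : ℂ) * (c * (w i : ℂ))) =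
      fun w => c * (((w i * Real.exp (-(∑ k, (w k) ^ 2) / (2 * v)) : ℝ)) : ℂ) := by
    funext w; push_cast; ring
  rw [heq]
  exact ((keyR1_int hv i).ofReal).const_mul c

lemma C0_int (hv : 0 < v) (c : ℂ) :
    Integrable (fun w : Fin n → ℝ =>
      (Real.exp (-(∑ k, (w k) ^ 2) / (2 * v)) : ℂ) * c) := by
  have heq : (fun w : Fin n → ℝ => (Real.exp (-(∑ k, (w k) ^ 2) / (2 * v)) : ℂ) * c) =
      fun w => c * (((Real.exp (-(∑ k, (w k) ^ 2) / (2 * v)) : ℝ)) : ℂ) := by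
    funext w; push_cast; ring
  rw [heq]
  exact ((keyR0_int hv).ofReal).const_mul c

lemma C2_val (hv : 0 < v) (i j : Fin n) (c : ℂ) :
    ∫ w : Fin n → ℝ,
      (Real.exp (-(∑ k, (w k) ^ 2) / (2 * v)) : ℂ) * (c * (w i : ℂ) * (w j : ℂ)) =
      c * (if i = j then (v : ℂ) else 0) * ((Real.sqrt (2 * Real.pi * v) : ℝ) : ℂ) ^ n := by
  have heq : (fun w : Fin n → ℝ =>
      (Real.exp (-(∑ k, (w k) ^ 2) / (2 * v)) : ℂ) * (c * (w i : ℂ) * (w j : ℂ))) =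
      fun w => c * (((w i * w j * Real.exp (-(∑ k, (w k) ^ 2) / (2 * v)) : ℝ)) : ℂ) := by
    funext w; push_cast; ring
  rw [heq, integral_const_mul, myIOR, keyR2_val hv i j]
  by_cases hij : i = j <;> simp [hij] <;> push_cast <;> ring

lemma C1_val (hv : 0 < v) (i : Fin n) (c : ℂ) :
    ∫ w : Fin n → ℝ,
      (Real.exp (-(∑ k, (w k) ^ 2) / (2 * v)) : ℂ) * (c * (w i : ℂ)) = 0 := by
  have heq : (fun w : Fin n → ℝ =>
      (Real.exp (-(∑ k, (w k) ^ 2) / (2 * v)) : ℂ) * (c * (w i : ℂ))) =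
      fun w => c * (((w i * Real.exp (-(∑ k, (w k) ^ 2) / (2 * v)) : ℝ)) : ℂ) := by
    funext w; push_cast; ring
  rw [heq, integral_const_mul, myIOR, keyR1_val hv i]
  simp

lemma C0_val (hv : 0 < v) (c : ℂ) :
    ∫ w : Fin n → ℝ,
      (Real.exp (-(∑ k, (w k) ^ 2) / (2 * v)) : ℂ) * c =
      c * ((Real.sqrt (2 * Real.pi * v) : ℝ) : ℂ) ^ n := by
  have heq : (fun w : Fin n → ℝ => (Real.exp (-(∑ k, (w k) ^ 2) / (2 * v)) : ℂ) * c) =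
      fun w => c * (((Real.exp (-(∑ k, (w k) ^ 2) / (2 * v)) : ℝ)) : ℂ) := by
    funext w; push_cast; ring
  rw [heq, integral_const_mul, myIOR, keyR0_val hv]
  push_cast
  ring

lemma hv_of_hτ {τ : ℝ} (hτ : τ ∈ Set.Ico (0 : ℝ) 1) : 0 < 1 - τ ^ 2 := by
  have h1 := hτ.1; have h2 := hτ.2; nlinarith

/-- Master lemma: Gaussian average of a (shifted) bilinear expression. -/
lemma master (τ : ℝ) (hτ : τ ∈ Set.Ico (0 : ℝ) 1) (n : ℕ) (a q s' : ℂ)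
    (p r : Fin n → ℂ) (R : Fin n → Fin n → ℂ) :
    gAvg τ n (fun w => a + ∑ i, ∑ j,
        (p i + q * (w i : ℂ)) * R i j * (r j + s' * (w j : ℂ))) =
      a + (∑ i, ∑ j, p i * R i j * r j) +
        q * s' * ((1 - τ ^ 2 : ℝ) : ℂ) * ∑ i, R i i := by
  have hv : 0 < 1 - τ ^ 2 := hv_of_hτ hτ
  set h : Fin n → Fin n → (Fin n → ℝ) → ℂ := fun i j w =>
    (Real.exp (-(∑ k, (w k) ^ 2) / (2 * (1 - τ ^ 2))) : ℂ) * (p i * R i j * r j) +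
    (Real.exp (-(∑ k, (w k) ^ 2) / (2 * (1 - τ ^ 2))) : ℂ) * ((p i * R i j * s') * (w j : ℂ)) +
    (Real.exp (-(∑ k, (w k) ^ 2) / (2 * (1 - τ ^ 2))) : ℂ) * ((q * R i j * r j) * (w i : ℂ)) +
    (Real.exp (-(∑ k, (w k) ^ 2) / (2 * (1 - τ ^ 2))) : ℂ) *
      ((q * R i j * s') * (w i : ℂ) * (w j : ℂ)) with hdef
  have hint : ∀ i j, Integrable (h i j) := fun i j => by
    have := (((C0_int hv (p i * R i j * r j)).add
      (C1_int hv j (p i * R i j * s'))).add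
      (C1_int hv i (q * R i j * r j))).add (C2_int hv i j (q * R i j * s'))
    exact this
  have hintsum : Integrable (fun w => ∑ i, ∑ j, h i j w) := by
    apply integrable_finset_sum
    intro i _
    exact integrable_finset_sum _ (fun j _ => hint i j)
  have hval : ∀ i j, ∫ w : Fin n → ℝ, h i j w =
      p i * R i j * r j * (((Real.sqrt (2 * Real.pi * (1 - τ ^ 2)) : ℝ) : ℂ) ^ n) +
        (q * R i j * s') * (if i = j then ((1 - τ ^ 2 : ℝ) : ℂ) else 0) *
          (((Real.sqrt (2 * Real.pi * (1 - τ ^ 2)) : ℝ) : ℂ) ^ n) := by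
    intro i j
    simp only [hdef]
    have i0 : Integrable (fun w : Fin n → ℝ =>
        (Real.exp (-(∑ k, (w k) ^ 2) / (2 * (1 - τ ^ 2))) : ℂ) * (p i * R i j * r j)) :=
      C0_int hv _
    have i1 : Integrable (fun w : Fin n → ℝ =>
        (Real.exp (-(∑ k, (w k) ^ 2) / (2 * (1 - τ ^ 2))) : ℂ) *
          ((p i * R i j * s') * (w j : ℂ))) := C1_int hv j _
    have i2 : Integrable (fun w : Fin n → ℝ =>
        (Real.exp (-(∑ k, (w k) ^ 2) / (2 * (1 - τ ^ 2))) : ℂ) *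
          ((q * R i j * r j) * (w i : ℂ))) := C1_int hv i _
    have i3 : Integrable (fun w : Fin n → ℝ =>
        (Real.exp (-(∑ k, (w k) ^ 2) / (2 * (1 - τ ^ 2))) : ℂ) *
          ((q * R i j * s') * (w i : ℂ) * (w j : ℂ))) := C2_int hv i j _
    have i01 : Integrable (fun w : Fin n → ℝ =>
        (Real.exp (-(∑ k, (w k) ^ 2) / (2 * (1 - τ ^ 2))) : ℂ) * (p i * R i j * r j) +
        (Real.exp (-(∑ k, (w k) ^ 2) / (2 * (1 - τ ^ 2))) : ℂ) *
          ((p i * R i j * s') * (w j : ℂ))) := i0.add i1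
    have i012 : Integrable (fun w : Fin n → ℝ =>
        (Real.exp (-(∑ k, (w k) ^ 2) / (2 * (1 - τ ^ 2))) : ℂ) * (p i * R i j * r j) +
        (Real.exp (-(∑ k, (w k) ^ 2) / (2 * (1 - τ ^ 2))) : ℂ) *
          ((p i * R i j * s') * (w j : ℂ)) +
        (Real.exp (-(∑ k, (w k) ^ 2) / (2 * (1 - τ ^ 2))) : ℂ) *
          ((q * R i j * r j) * (w i : ℂ))) := i01.add i2
    rw [integral_add i012 i3, integral_add i01 i2, integral_add i0 i1,
      C0_val hv, C1_val hv, C1_val hv, C2_val hv]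
    ring
  -- rewrite the integrand
  have hfun : (fun w : Fin n → ℝ =>
      (Real.exp (-(∑ i, (w i) ^ 2) / (2 * (1 - τ ^ 2))) : ℂ) *
        (a + ∑ i, ∑ j, (p i + q * (w i : ℂ)) * R i j * (r j + s' * (w j : ℂ)))) =
      fun w => (Real.exp (-(∑ k, (w k) ^ 2) / (2 * (1 - τ ^ 2))) : ℂ) * a +
        ∑ i, ∑ j, h i j w := by
    funext w
    simp only [hdef, Finset.mul_sum, mul_add]
    congr 1
    refine Finset.sum_congr rfl fun i _ => Finset.sum_congr rfl fun j _ => ?_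
    ring
  rw [gAvg, hfun, integral_add (C0_int hv a) hintsum,
    integral_finset_sum _ (fun i _ => integrable_finset_sum _ (fun j _ => hint i j))]
  have hswap : ∀ i ∈ (univ : Finset (Fin n)),
      ∫ w : Fin n → ℝ, ∑ j, h i j w = ∑ j, ∫ w, h i j w :=
    fun i _ => integral_finset_sum _ (fun j _ => hint i j)
  rw [Finset.sum_congr rfl hswap]
  simp only [hval, C0_val hv]
  set Z : ℂ := ((Real.sqrt (2 * Real.pi * (1 - τ ^ 2)) : ℝ) : ℂ) ^ n with hZdef
  have hZne : Z ≠ 0 := by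
    rw [hZdef]
    apply pow_ne_zero
    simp only [ne_eq, Complex.ofReal_eq_zero]
    positivity
  have hsum : ∀ i : Fin n,
      ∑ j, (q * R i j * s') * (if i = j then ((1 - τ ^ 2 : ℝ) : ℂ) else 0) * Z =
      R i i * (q * s' * ((1 - τ ^ 2 : ℝ) : ℂ) * Z) := by
    intro i
    rw [Finset.sum_eq_single i]
    · simp; ring
    · intro j _ hji
      simp [Ne.symm hji]
    · intro hi; exact absurd (Finset.mem_univ i) hi
  have e1 : ∑ i, ∑ j,
      (p i * R i j * r j * Z +
        (q * R i j * s') * (if i = j then ((1 - τ ^ 2 : ℝ) : ℂ) else 0) * Z) =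
      (∑ i, ∑ j, p i * R i j * r j) * Z +
        q * s' * ((1 - τ ^ 2 : ℝ) : ℂ) * (∑ i, R i i) * Z := by
    simp only [Finset.sum_add_distrib]
    congr 1
    · rw [Finset.sum_mul]
      exact Finset.sum_congr rfl fun i _ => by rw [Finset.sum_mul]
    · rw [Finset.sum_congr rfl (fun i _ => hsum i), ← Finset.sum_mul]
      ring
  rw [e1]
  have e2 : a * Z + ((∑ i, ∑ j, p i * R i j * r j) * Z +
      q * s' * ((1 - τ ^ 2 : ℝ) : ℂ) * (∑ i, R i i) * Z) =
      (a + (∑ i, ∑ j, p i * R i j * r j) +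
        q * s' * ((1 - τ ^ 2 : ℝ) : ℂ) * ∑ i, R i i) * Z := by ring
  rw [e2, mul_comm _ Z, ← mul_assoc, inv_mul_cancel₀ hZne, one_mul]


end GA

theorem gaussian_average_overlap_bilinear
    (τ : ℝ) (hτ : τ ∈ Set.Ico (0 : ℝ) 1) (n : ℕ) (hn : 1 ≤ n)
    (b c : ℝ) (hc : 0 < c) (hbc : c ≤ b)
    (y δ : ℝ) (hy : y = Real.sqrt (b * c)) (hδ : δ = b - c)
    (x : ℝ) (z : ℂ) (hz : z = (x : ℂ) + Complex.I * (y : ℂ))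
    (X₂ : Matrix (Fin n) (Fin n) ℝ)
    (M : Matrix (Fin n) (Fin n) ℂ)
    (hM : M = z • (1 : Matrix (Fin n) (Fin n) ℂ) - X₂.map (fun a => (a : ℂ)))
    (hMunit : IsUnit M.det)
    (B : Matrix (Fin n) (Fin n) ℂ) (hB : B = Mᴴ * M)
    (c₁ c₂ : ℝ)
    (hc₁ : c₁ = (1 / 4) * (2 + (δ ^ 2 + 2 * y ^ 2) / y ^ 2))
    (hc₂ : c₂ = (1 / 2) * (1 + c / b))
    (S : (Fin n → ℝ) → (Fin n → ℝ) → ℂ)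
    (hS : S = fun w₁ w₂ => (1 / 2 : ℂ) * ∑ i, ∑ j,
      (((w₁ i : ℝ) : ℂ) - Complex.I * (Real.sqrt (b / c) : ℝ) * ((w₂ i : ℝ) : ℂ)) *
        (B⁻¹) i j *
      (((w₁ j : ℝ) : ℂ) + Complex.I * (Real.sqrt (b / c) : ℝ) * ((w₂ j : ℝ) : ℂ))) :
    gAvg τ n (fun w₁ => gAvg τ n (fun w₂ => (c₁ : ℂ) + (c₂ : ℂ) * S w₁ w₂)) =
      (1 / 2 : ℂ) * ((2 : ℂ) + (δ ^ 2 : ℝ) / ((2 * y ^ 2 : ℝ) : ℂ)) *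
        (1 + ((1 - τ ^ 2 : ℝ) : ℂ) * (B⁻¹).trace) := by
  have hb : 0 < b := lt_of_lt_of_le hc hbc
  have hbc0 : 0 < b * c := mul_pos hb hc
  have hy2 : y ^ 2 = b * c := by rw [hy]; exact Real.sq_sqrt hbc0.le
  -- notation
  set κ : ℂ := ((Real.sqrt (b / c) : ℝ) : ℂ) with hκdef
  have hκ2 : κ ^ 2 = ((b / c : ℝ) : ℂ) := by
    rw [hκdef, ← Complex.ofReal_pow, Real.sq_sqrt (div_nonneg hb.le hc.le)]
  have hqs : (-(Complex.I * κ)) * (Complex.I * κ) = ((b / c : ℝ) : ℂ) := by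
    calc (-(Complex.I * κ)) * (Complex.I * κ) = -(Complex.I ^ 2) * κ ^ 2 := by ring
      _ = κ ^ 2 := by rw [Complex.I_sq]; ring
      _ = ((b / c : ℝ) : ℂ) := hκ2
  -- step 1: inner integrand in master form
  have hinner : ∀ w₁ : Fin n → ℝ,
      (fun w₂ : Fin n → ℝ => (c₁ : ℂ) + (c₂ : ℂ) * S w₁ w₂) =
      fun w₂ : Fin n → ℝ => (c₁ : ℂ) + ∑ i, ∑ j,
        (((w₁ i : ℝ) : ℂ) + (-(Complex.I * κ)) * ((w₂ i : ℝ) : ℂ)) *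
          ((c₂ : ℂ) / 2 * B⁻¹ i j) *
        (((w₁ j : ℝ) : ℂ) + (Complex.I * κ) * ((w₂ j : ℝ) : ℂ)) := by
    intro w₁
    funext w₂
    rw [hS]
    simp only [Finset.mul_sum]
    congr 1
    refine Finset.sum_congr rfl fun i _ => Finset.sum_congr rfl fun j _ => ?_
    rw [hκdef]
    ring
  -- step 2: evaluate the inner average, written again in master form
  have h1 : (fun w₁ : Fin n → ℝ => gAvg τ n (fun w₂ => (c₁ : ℂ) + (c₂ : ℂ) * S w₁ w₂)) =
      fun w₁ : Fin n → ℝ =>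
        ((c₁ : ℂ) + (-(Complex.I * κ)) * (Complex.I * κ) * ((1 - τ ^ 2 : ℝ) : ℂ) *
            ∑ i, ((c₂ : ℂ) / 2 * B⁻¹ i i)) +
        ∑ i, ∑ j, ((0 : ℂ) + 1 * ((w₁ i : ℝ) : ℂ)) * ((c₂ : ℂ) / 2 * B⁻¹ i j) *
          ((0 : ℂ) + 1 * ((w₁ j : ℝ) : ℂ)) := by
    funext w₁
    rw [hinner w₁,
      GA.master τ hτ n (c₁ : ℂ) (-(Complex.I * κ)) (Complex.I * κ)
        (fun i => ((w₁ i : ℝ) : ℂ)) (fun j => ((w₁ j : ℝ) : ℂ))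
        (fun i j => (c₂ : ℂ) / 2 * B⁻¹ i j)]
    rw [show (∑ i, ∑ j, ((w₁ i : ℝ) : ℂ) * ((c₂ : ℂ) / 2 * B⁻¹ i j) * ((w₁ j : ℝ) : ℂ)) =
        ∑ i, ∑ j, ((0 : ℂ) + 1 * ((w₁ i : ℝ) : ℂ)) * ((c₂ : ℂ) / 2 * B⁻¹ i j) *
          ((0 : ℂ) + 1 * ((w₁ j : ℝ) : ℂ)) from
      Finset.sum_congr rfl fun i _ => Finset.sum_congr rfl fun j _ => by ring]
    ring
  rw [h1, GA.master τ hτ n _ 1 1 (fun _ => (0 : ℂ)) (fun _ => (0 : ℂ))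
    (fun i j => (c₂ : ℂ) / 2 * B⁻¹ i j)]
  -- clean up
  rw [hqs]
  simp only [zero_mul, mul_zero, Finset.sum_const_zero, add_zero, zero_add, one_mul]
  rw [show (∑ i, ((c₂ : ℂ) / 2 * B⁻¹ i i)) = (c₂ : ℂ) / 2 * ∑ i, B⁻¹ i i from
    (Finset.mul_sum _ _ _).symm]
  have htr : (B⁻¹).trace = ∑ i, B⁻¹ i i := rfl
  rw [htr]
  -- final scalar identities
  have hy2ne : y ^ 2 ≠ 0 := by rw [hy2]; exact hbc0.ne'
  have hCc : (1 / 2 : ℂ) * ((2 : ℂ) + (δ ^ 2 : ℝ) / ((2 * y ^ 2 : ℝ) : ℂ)) = ((c₁ : ℝ) : ℂ) := by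
    have hreal : (1 / 2) * (2 + δ ^ 2 / (2 * y ^ 2)) = c₁ := by
      rw [hc₁]
      field_simp [show y ≠ 0 by rintro rfl; simp at hy2ne]
      ring
    rw [← hreal]
    push_cast
    ring
  have hKr : (b / c) * (c₂ / 2) + c₂ / 2 = c₁ := by
    rw [hc₁, hc₂, hδ, hy2]
    field_simp
    ring
  have hKc : ((b / c : ℝ) : ℂ) * ((c₂ : ℂ) / 2) + ((c₂ : ℂ) / 2) = ((c₁ : ℝ) : ℂ) := by
    rw [← hKr]
    push_cast
    ring
  set T : ℂ := ∑ i, B⁻¹ i i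
  set V : ℂ := ((1 - τ ^ 2 : ℝ) : ℂ)
  linear_combination (-1 - V * T) * hCc + (V * T) * hKc
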